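/- Let x, y ∈ ℝ^N and let γ : [0,1] → ℝ^N be a Lipschitz path from x to y parameterized with constant speed L = |γ| (i.e., ‖γ(s) - γ(t)‖ ≤ L|s - t| for all s,t, and the length of γ is L). Let γ̄(t) = (1-t)x + ty be the straight path, with length |γ̄| = ‖x - y‖. Then for every t ∈ [0,1], ‖γ(t) - γ̄(t)‖² ≤ t(1-t)(L² - ‖x-y‖²). -/

import Mathlib

theorem path_deviation_pointwise {N : ℕ} (x y : EuclideanSpace ℝ (Fin N)) (L : ℝ)
    (γ : ℝ → EuclideanSpace ℝ (Fin N)) (h0 : γ 0 = x) (h1 : γ 1 = y)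
    (hlip : ∀ s ∈ Set.Icc (0:ℝ) 1, ∀ t ∈ Set.Icc (0:ℝ) 1, ‖γ s - γ t‖ ≤ L * |s - t|) :
    ∀ t ∈ Set.Icc (0:ℝ) 1,
      ‖γ t - ((1 - t) • x + t • y)‖ ^ 2 ≤ t * (1 - t) * (L ^ 2 - ‖x - y‖ ^ 2) := by
  intro t ⟨ht0, ht1⟩
  have h01 : (0:ℝ) ∈ Set.Icc (0:ℝ) 1 := ⟨le_refl 0, zero_le_one⟩
  have h11 : (1:ℝ) ∈ Set.Icc (0:ℝ) 1 := ⟨zero_le_one, le_refl 1⟩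
  have hL : 0 ≤ L := by
    have := hlip 1 h11 0 h01
    have hn : (0:ℝ) ≤ ‖γ 1 - γ 0‖ := norm_nonneg _
    simp only [abs_of_nonneg (zero_le_one (α := ℝ)), sub_zero] at this
    nlinarith
  set a := γ t - x with ha_def
  set b := γ t - y with hb_def
  have ha : ‖a‖ ≤ L * t := by
    have := hlip t ⟨ht0, ht1⟩ 0 h01
    simpa [ha_def, h0, abs_of_nonneg ht0] using this
  have hb : ‖b‖ ≤ L * (1 - t) := by
    have := hlip t ⟨ht0, ht1⟩ 1 h11
    have habs : |t - 1| = 1 - t := by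
      rw [abs_of_nonpos (by linarith)]; ring
    simpa [hb_def, h1, habs] using this
  have key : γ t - ((1 - t) • x + t • y) = (1 - t) • a + t • b := by
    simp only [ha_def, hb_def, smul_sub]
    module
  rw [key]
  have hab : a - b = y - x := by simp [ha_def, hb_def]
  have expand : ‖(1 - t) • a + t • b‖ ^ 2
      = (1 - t) * ‖a‖ ^ 2 + t * ‖b‖ ^ 2 - t * (1 - t) * ‖y - x‖ ^ 2 := by
    have e1 : ‖(1 - t) • a + t • b‖ ^ 2
        = ‖(1-t) • a‖^2 + 2 * inner ℝ ((1-t) • a) (t • b) + ‖t • b‖^2 :=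
      norm_add_sq_real _ _
    have e2 : ‖a - b‖ ^ 2 = ‖a‖^2 - 2 * inner ℝ a b + ‖b‖^2 := norm_sub_sq_real _ _
    rw [hab] at e2
    rw [e1, real_inner_smul_left, real_inner_smul_right, norm_smul, norm_smul]
    rw [Real.norm_eq_abs, Real.norm_eq_abs, abs_of_nonneg ht0,
      abs_of_nonneg (by linarith : (0:ℝ) ≤ 1 - t)]
    linear_combination (t * (1 - t)) * e2
  rw [expand]
  have hxy : ‖y - x‖ = ‖x - y‖ := norm_sub_rev _ _
  rw [hxy]
  have hsa : ‖a‖ ^ 2 ≤ (L * t) ^ 2 := by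
    nlinarith [norm_nonneg a]
  have hsb : ‖b‖ ^ 2 ≤ (L * (1 - t)) ^ 2 := by
    nlinarith [norm_nonneg b]
  nlinarith [mul_nonneg ht0 (by linarith : (0:ℝ) ≤ 1 - t)]
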